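/- For each n ≥ 1 with n ≥ 2, the map b ↦ λ_n(b), where λ_n(b) is the unique solution of Ai'(-λ) - b·Ai(-λ) = 0 in the interval (-a_{n-1}, -a_n) (a_k the zeros of Ai), is continuously differentiable on ℝ with derivative λ_n'(b) = 1/(λ_n(b) + b²). -/

import Mathlib

open Complex MeasureTheory Filter Set Topology intervalIntegral

/-- The Airy function of the first kind, Ai(x) = (1/π) lim_{R→∞} ∫₀^R cos(t³/3 + xt) dt. -/
noncomputable def airyAi (x : ℝ) : ℝ :=
  limUnder Filter.atTop
    (fun R : ℝ => (1 / Real.pi) * ∫ t in (0:ℝ)..R, Real.cos (t ^ 3 / 3 + x * t))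

noncomputable section AiryAux

/-- `exp(iπ/6)` -/
def ac : ℂ := Complex.exp ((Real.pi/6 : ℝ) * Complex.I)

lemma ac_cube : ac ^ 3 = Complex.I := by
  rw [ac, ← Complex.exp_nat_mul]
  rw [show ((3:ℕ) : ℂ) * (↑(Real.pi/6) * Complex.I) = (↑(Real.pi/2) : ℝ) * Complex.I by
    push_cast; ring]
  rw [Complex.exp_mul_I]
  push_cast
  simp

lemma abs_ac : ‖ac‖ = 1 := by
  rw [ac]; exact Complex.norm_exp_ofReal_mul_I _

lemma ac_im : ac.im = 1/2 := by
  rw [ac, Complex.exp_ofReal_mul_I_im, Real.sin_pi_div_six]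

lemma Iac_re : (Complex.I * ac).re = -(1/2) := by
  have : (Complex.I * ac).re = -(ac.im) := by simp [Complex.mul_re]
  rw [this, ac, Complex.exp_ofReal_mul_I_im, Real.sin_pi_div_six]

end AiryAux
noncomputable section Airy2
open Real

/-- the rotated integrand -/
def FA (x s : ℝ) : ℂ := Complex.exp (-(s:ℂ)^3/3 + Complex.I * ac * x * s)

/-- the original integrand, as a function of a complex variable -/
def hh (x : ℝ) (z : ℂ) : ℂ := Complex.exp (Complex.I * (z^3/3 + x * z))

lemma FA_eq (x s : ℝ) : hh x (ac * s) = FA x s := by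
  rw [hh, FA]
  congr 1
  have h3 : (ac * s)^3 = Complex.I * s^3 := by
    rw [mul_pow, ac_cube]
  rw [mul_add, h3]
  ring_nf
  rw [Complex.I_sq]
  ring

lemma norm_FA (x s : ℝ) : ‖FA x s‖ = Real.exp (-(s^3)/3 - x*s/2) := by
  rw [FA, Complex.norm_exp]
  congr 1
  have : (-(s:ℂ)^3/3 + Complex.I * ac * x * s)
      = Complex.ofReal (-(s^3)/3) + Complex.ofReal (x*s) * (Complex.I * ac) := by
    push_cast; ring
  rw [this]
  simp [Complex.add_re, Complex.mul_re, Complex.ofReal_re, Complex.ofReal_im, ← Complex.ofReal_pow,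
    Iac_re, ac_im]
  ring

lemma contFA (x : ℝ) : Continuous (fun s : ℝ => FA x s) := by
  unfold FA; fun_prop

/-- master integrability lemma -/
lemma integrable_aux (k : ℕ) (M : ℝ) :
    IntegrableOn (fun s : ℝ => s^k * Real.exp (-(s^3)/3 + M*s)) (Ioi 0) := by
  -- bound by C * exp(-s)
  set v : ℝ → ℝ := fun s => s^k * Real.exp (-(s^3)/3 + (M+1)*s) with hv
  have hvcont : Continuous v := by fun_prop
  have hvtend : Tendsto v atTop (𝓝 0) := by
    have h1 : Tendsto (fun s : ℝ => s^k * Real.exp (-s)) atTop (𝓝 0) := by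
      simpa [Real.exp_neg, div_eq_mul_inv] using tendsto_pow_mul_exp_neg_atTop_nhds_zero k
    apply squeeze_zero_norm' _ h1
    filter_upwards [eventually_ge_atTop (max 1 (Real.sqrt (3*(M+2))))] with s hs
    have hs1 : (1:ℝ) ≤ s := le_trans (le_max_left _ _) hs
    have hs2 : Real.sqrt (3*(M+2)) ≤ s := le_trans (le_max_right _ _) hs
    have hsq : 3*(M+2) ≤ s^2 := by
      rcases le_or_gt (3*(M+2)) 0 with h | h
      · nlinarith
      · nlinarith [Real.sq_sqrt h.le, Real.sqrt_nonneg (3*(M+2))]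
    have hpos : (0:ℝ) < s := lt_of_lt_of_le one_pos hs1
    have hexp : Real.exp (-(s^3)/3 + (M+1)*s) ≤ Real.exp (-s) := by
      apply Real.exp_le_exp.2
      nlinarith
    rw [hv]
    rw [Real.norm_eq_abs, _root_.abs_of_nonneg (by positivity)]
    exact mul_le_mul_of_nonneg_left hexp (by positivity)
  -- boundedness of v on [0, ∞)
  have hev : ∀ᶠ s in atTop, v s < 1 := hvtend.eventually (eventually_lt_nhds one_pos)
  rw [eventually_atTop] at hev
  obtain ⟨s₀, hs₀⟩ := hev
  obtain ⟨C₀, hC₀⟩ := (isCompact_Icc (a := (0:ℝ)) (b := s₀)).bddAbove_image hvcont.continuousOn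
  set C := max C₀ 1 with hC
  have hbound : ∀ s ∈ Ioi (0:ℝ), s^k * Real.exp (-(s^3)/3 + M*s) ≤ C * Real.exp (-s) := by
    intro s hs
    have hfv : s^k * Real.exp (-(s^3)/3 + M*s) = v s * Real.exp (-s) := by
      rw [hv]
      rw [mul_assoc, ← Real.exp_add]
      ring_nf
    rw [hfv]
    have hvle : v s ≤ C := by
      rcases le_or_gt s s₀ with h | h
      · exact le_trans (hC₀ (mem_image_of_mem v ⟨le_of_lt hs, h⟩)) (le_max_left _ _)
      · exact le_trans (hs₀ s h.le).le (le_max_right _ _)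
    exact mul_le_mul_of_nonneg_right hvle (Real.exp_pos _).le
  have hgint : IntegrableOn (fun s : ℝ => C * Real.exp (-s)) (Ioi 0) := by
    have := (exp_neg_integrableOn_Ioi (0:ℝ) (b := 1) one_pos).const_mul C
    exact (by simpa using this : Integrable (fun x => C * rexp (-x)) (volume.restrict (Ioi 0)))
  apply Integrable.mono' hgint
  · exact (Continuous.aestronglyMeasurable (by fun_prop)).restrict
  · filter_upwards [ae_restrict_mem measurableSet_Ioi] with s hs
    have h0 : (0:ℝ) < s := hs
    rw [Real.norm_eq_abs, _root_.abs_of_nonneg (by positivity)]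
    exact hbound s hs

end Airy2
noncomputable section Airy3
open Real

lemma norm_pow_FA (k : ℕ) (x s : ℝ) (hs : 0 ≤ s) :
    ‖(Complex.I * ac * s)^k * FA x s‖ = s^k * Real.exp (-(s^3)/3 - x*s/2) := by
  rw [norm_mul, norm_pow, norm_mul, norm_mul,
    Complex.norm_I, abs_ac, Complex.norm_real, Real.norm_eq_abs, _root_.abs_of_nonneg hs,
    norm_FA]
  ring

lemma integrableOn_pow_FA (k : ℕ) (x : ℝ) :
    IntegrableOn (fun s : ℝ => (Complex.I * ac * s)^k * FA x s) (Ioi 0) := by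
  apply Integrable.mono' (integrable_aux k |x|)
  · exact (Continuous.aestronglyMeasurable (by unfold FA; fun_prop)).restrict
  · filter_upwards [ae_restrict_mem measurableSet_Ioi] with s hs
    have h0 : (0:ℝ) < s := hs
    rw [norm_pow_FA k x s h0.le]
    apply mul_le_mul_of_nonneg_left _ (by positivity)
    apply Real.exp_le_exp.2
    have : -x/2 ≤ |x| := by
      rcases abs_cases x with ⟨h, _⟩ | ⟨h, _⟩ <;> nlinarith [abs_nonneg x]
    nlinarith

/-- iterated moment integrals of the rotated Airy integrand -/
def fAk (k : ℕ) (x : ℝ) : ℂ := ∫ s in Ioi (0:ℝ), (Complex.I * ac * s)^k * FA x s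

lemma hasDerivAt_ofReal_mul (c : ℂ) (x : ℝ) : HasDerivAt (fun y : ℝ => c * (y:ℂ)) c x := by
  have h0 : HasDerivAt (fun y : ℝ => (y:ℂ)) 1 x := by
    simpa using (hasDerivAt_id x).ofReal_comp
  simpa using h0.const_mul c

lemma hasDerivAt_FA (s : ℝ) (x : ℝ) :
    HasDerivAt (fun x : ℝ => FA x s) (Complex.I * ac * s * FA x s) x := by
  have harg : HasDerivAt (fun x : ℝ => -(s:ℂ)^3/3 + Complex.I * ac * x * s)
      (Complex.I * ac * s) x := by
    have := (hasDerivAt_ofReal_mul (Complex.I * ac * s) x).const_add (-(s:ℂ)^3/3)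
    convert this using 2 with y
    · rfl
    · ring
  have := harg.cexp
  simpa [FA, mul_comm] using this

lemma hasDerivAt_fAk (k : ℕ) (x : ℝ) : HasDerivAt (fAk k) (fAk (k+1) x) x := by
  have key := hasDerivAt_integral_of_dominated_loc_of_deriv_le (μ := volume.restrict (Ioi 0))
    (F := fun x (s : ℝ) => (Complex.I * ac * s)^k * FA x s)
    (F' := fun x (s : ℝ) => (Complex.I * ac * s)^(k+1) * FA x s)
    (x₀ := x)
    (bound := fun s : ℝ => s^(k+1) * Real.exp (-(s^3)/3 + (|x|+1)*s))
    (Metric.ball_mem_nhds x one_pos)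
    (Filter.Eventually.of_forall fun y =>
      (Continuous.aestronglyMeasurable (by unfold FA; fun_prop)).restrict)
    (integrableOn_pow_FA k x)
    (Continuous.aestronglyMeasurable (by unfold FA; fun_prop)).restrict
    ?_ (integrable_aux (k+1) (|x|+1)) ?_
  · exact key.2
  · filter_upwards [ae_restrict_mem measurableSet_Ioi] with s hs y hy
    have h0 : (0:ℝ) < s := hs
    rw [norm_pow_FA (k+1) y s h0.le]
    apply mul_le_mul_of_nonneg_left _ (by positivity)
    apply Real.exp_le_exp.2
    have hy' : |y| ≤ |x| + 1 := by
      have := abs_sub_abs_le_abs_sub y x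
      have h2 : |y - x| < 1 := by simpa [Real.dist_eq] using Metric.mem_ball.1 hy
      linarith
    have : -y/2 ≤ |x|+1 := by
      rcases abs_cases y with ⟨h, _⟩ | ⟨h, _⟩ <;> nlinarith [abs_nonneg y]
    nlinarith
  · filter_upwards [ae_restrict_mem measurableSet_Ioi] with s hs y _
    have := (hasDerivAt_FA s y).const_mul ((Complex.I * ac * s)^k)
    convert this using 1
    · rfl
    ring

end Airy3
noncomputable section Airy4
open Real

lemma hasDerivAt_ofReal' (s : ℝ) : HasDerivAt (fun y : ℝ => (y:ℂ)) 1 s := by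
  simpa using (hasDerivAt_id s).ofReal_comp

lemma hasDerivAt_FA_s (x s : ℝ) :
    HasDerivAt (fun s : ℝ => -(FA x s)) (((s:ℂ)^2 - Complex.I * ac * x) * FA x s) s := by
  have hcube := (hasDerivAt_ofReal' s).mul ((hasDerivAt_ofReal' s).mul (hasDerivAt_ofReal' s))
  have hc := hcube.const_mul (-(1:ℂ)/3)
  have hl := hasDerivAt_ofReal_mul (Complex.I * ac * x) s
  have comb := (hc.add hl).cexp.neg
  have heq : ∀ y : ℝ, Complex.exp (-(1:ℂ)/3 * ((y:ℂ) * ((y:ℂ) * (y:ℂ))) + Complex.I * ac * x * y)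
      = FA x y := by
    intro y; rw [FA]; congr 1; ring
  simp only [Pi.mul_apply, Pi.add_apply, heq] at comb
  exact comb.congr_deriv (by ring)

lemma tendsto_FA_atTop (x : ℝ) : Tendsto (fun s : ℝ => -(FA x s)) atTop (𝓝 0) := by
  apply squeeze_zero_norm' _ Real.tendsto_exp_neg_atTop_nhds_zero
  filter_upwards [eventually_ge_atTop (max 1 (Real.sqrt (3*(|x|+2))))] with s hs
  have hs1 : (1:ℝ) ≤ s := le_trans (le_max_left _ _) hs
  have hs2 : Real.sqrt (3*(|x|+2)) ≤ s := le_trans (le_max_right _ _) hs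
  have hsq : 3*(|x|+2) ≤ s^2 := by
    nlinarith [Real.sq_sqrt (by positivity : (0:ℝ) ≤ 3*(|x|+2)), Real.sqrt_nonneg (3*(|x|+2))]
  rw [norm_neg, norm_FA]
  apply Real.exp_le_exp.2
  have hxb : -x ≤ |x| := neg_le_abs x
  nlinarith [abs_nonneg x]

lemma integral_sq_FA (x : ℝ) :
    ∫ s in Ioi (0:ℝ), ((s:ℂ)^2 - Complex.I * ac * x) * FA x s = 1 := by
  have hint : IntegrableOn (fun s : ℝ => ((s:ℂ)^2 - Complex.I * ac * x) * FA x s) (Ioi 0) := by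
    have h2 : IntegrableOn (fun s : ℝ => ((Complex.I*ac)^2)⁻¹ * ((Complex.I * ac * s)^2 * FA x s)) (Ioi 0) :=
      (integrableOn_pow_FA 2 x).const_mul _
    have h0 : IntegrableOn (fun s : ℝ => (Complex.I * ac * x) * ((Complex.I * ac * s)^0 * FA x s)) (Ioi 0) :=
      (integrableOn_pow_FA 0 x).const_mul _
    have hIac : (Complex.I * ac) ≠ 0 := by
      intro h
      have := congrArg (‖·‖) h
      rw [norm_mul, Complex.norm_I, abs_ac] at this
      simp at this
    apply MeasureTheory.IntegrableOn.congr_fun (h2.sub h0) _ measurableSet_Ioi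
    intro s _
    simp only [Pi.sub_apply, pow_zero, one_mul]
    have hac0 : ac ≠ 0 := right_ne_zero_of_mul hIac
    field_simp
  have := integral_Ioi_of_hasDerivAt_of_tendsto (a := (0:ℝ))
    (f := fun s : ℝ => -(FA x s))
    (f' := fun s : ℝ => ((s:ℂ)^2 - Complex.I * ac * x) * FA x s)
    (m := 0)
    (Continuous.continuousWithinAt (by unfold FA; fun_prop))
    (fun s _ => hasDerivAt_FA_s x s) hint (tendsto_FA_atTop x)
  rw [this]
  simp [FA]

lemma fAk_zero_eq (x : ℝ) : fAk 0 x = ∫ s in Ioi (0:ℝ), FA x s := by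
  unfold fAk; simp

lemma fAk2_eq (x : ℝ) : ac * fAk 2 x = (x:ℂ) * (ac * fAk 0 x) - Complex.I := by
  have h2 : IntegrableOn (fun s : ℝ => ((s:ℂ)^2 - Complex.I * ac * x) * FA x s) (Ioi 0) := by
    have := integral_sq_FA x
    by_contra hc
    rw [MeasureTheory.integral_undef hc] at this
    exact one_ne_zero this.symm
  have h0 : IntegrableOn (fun s : ℝ => FA x s) (Ioi 0) := by
    have := integrableOn_pow_FA 0 x
    simpa using this
  have hsplit : ∫ s in Ioi (0:ℝ), (s:ℂ)^2 * FA x s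
      = 1 + Complex.I * ac * x * fAk 0 x := by
    have hs2 : IntegrableOn (fun s : ℝ => (s:ℂ)^2 * FA x s) (Ioi 0) := by
      have hIac : ‖Complex.I * ac‖ = 1 := by
        rw [norm_mul, Complex.norm_I, abs_ac]; norm_num
      have hIacne : (Complex.I * ac) ≠ 0 := by
        intro h; rw [h] at hIac; simp at hIac
      have hI := (integrableOn_pow_FA 2 x).const_mul (((Complex.I*ac)^2)⁻¹)
      apply MeasureTheory.IntegrableOn.congr_fun hI _ measurableSet_Ioi
      intro s _
      have hac0 : ac ≠ 0 := right_ne_zero_of_mul hIacne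
      field_simp
    have heq : (fun s : ℝ => ((s:ℂ)^2 - Complex.I * ac * x) * FA x s)
        = fun s : ℝ => (s:ℂ)^2 * FA x s - (Complex.I * ac * x) * FA x s := by
      funext s; ring
    have := integral_sq_FA x
    rw [heq] at this
    rw [MeasureTheory.integral_sub hs2 (h0.const_mul _)] at this
    rw [MeasureTheory.integral_const_mul] at this
    rw [fAk_zero_eq]
    have : ∫ s in Ioi (0:ℝ), (s:ℂ)^2 * FA x s
        = 1 + Complex.I * ac * x * (∫ s in Ioi (0:ℝ), FA x s) := by
      rw [← this]; ring
    exact this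
  have hfa2 : fAk 2 x = (Complex.I * ac)^2 * (∫ s in Ioi (0:ℝ), (s:ℂ)^2 * FA x s) := by
    rw [fAk, ← MeasureTheory.integral_const_mul]
    congr 1; funext s; ring
  rw [hfa2, hsplit]
  have : ac * ((Complex.I * ac)^2 * (1 + Complex.I * ac * x * fAk 0 x))
      = Complex.I^2 * ac^3 * (1 + Complex.I * ac * x * fAk 0 x) := by ring
  rw [this, ac_cube]
  linear_combination (Complex.I + (Complex.I^2 - 1) * (ac * (x:ℂ) * fAk 0 x)) * Complex.I_sq

end Airy4
noncomputable section Airy5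
open Real

/-- the Airy function (nice representation) -/
def g0 (x : ℝ) : ℝ := (1/Real.pi) * (ac * fAk 0 x).re

/-- the derivative of the Airy function -/
def g1 (x : ℝ) : ℝ := (1/Real.pi) * (ac * fAk 1 x).re

lemma hasDerivAt_g0 (x : ℝ) : HasDerivAt g0 (g1 x) x := by
  have h := (hasDerivAt_fAk 0 x).const_mul ac
  have h2 : HasDerivAt (fun x => (ac * fAk 0 x).re) ((ac * fAk 1 x).re) x :=
    Complex.reCLM.hasFDerivAt.comp_hasDerivAt x h
  unfold g0 g1
  exact h2.const_mul (1/Real.pi)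

lemma hasDerivAt_g1 (x : ℝ) : HasDerivAt g1 (x * g0 x) x := by
  have h := (hasDerivAt_fAk 1 x).const_mul ac
  have h2 : HasDerivAt (fun x => (ac * fAk 1 x).re) ((ac * fAk 2 x).re) x :=
    Complex.reCLM.hasFDerivAt.comp_hasDerivAt x h
  have h3 := h2.const_mul (1/Real.pi)
  have hval : (1/Real.pi) * (ac * fAk 2 x).re = x * g0 x := by
    rw [fAk2_eq, g0]
    simp [Complex.sub_re, Complex.mul_re, Complex.ofReal_re, Complex.ofReal_im]
    ring
  rw [← hval]
  unfold g1
  exact h3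

end Airy5
noncomputable section Airy6
open Real

lemma hasDerivAt_expI (θ : ℝ) :
    HasDerivAt (fun θ : ℝ => Complex.exp ((θ:ℂ) * Complex.I))
      (Complex.exp ((θ:ℂ) * Complex.I) * Complex.I) θ := by
  have h0 : HasDerivAt (fun θ : ℝ => (θ:ℂ) * Complex.I) Complex.I θ := by
    simpa using (hasDerivAt_ofReal' θ).mul_const Complex.I
  simpa using h0.cexp

lemma exp_poly_eq_hh (x s : ℝ) (w : ℂ) :
    Complex.exp ((Complex.I * s^3/3) * w^3 + (Complex.I * x * s) * w) = hh x (w * s) := by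
  rw [hh]; congr 1; push_cast; ring

lemma hasDerivAt_E (x s R θ : ℝ) :
    HasDerivAt (fun θ : ℝ => Complex.exp ((θ:ℂ) * Complex.I) * hh x (Complex.exp ((θ:ℂ) * Complex.I) * s))
      (Complex.I * (Complex.exp ((θ:ℂ) * Complex.I) * hh x (Complex.exp ((θ:ℂ) * Complex.I) * s) *
        (1 + Complex.I * ((Complex.exp ((θ:ℂ) * Complex.I))^3 * s^3
          + x * (Complex.exp ((θ:ℂ) * Complex.I)) * s)))) θ := by
  set w : ℝ → ℂ := fun θ => Complex.exp ((θ:ℂ) * Complex.I) with hwdef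
  have hw : ∀ t : ℝ, HasDerivAt w (w t * Complex.I) t := fun t => hasDerivAt_expI t
  have hw3 : HasDerivAt (fun t : ℝ => w t * (w t * w t))
      ((w θ * Complex.I) * (w θ * w θ) + w θ * ((w θ * Complex.I) * w θ + w θ * (w θ * Complex.I))) θ :=
    (hw θ).mul ((hw θ).mul (hw θ))
  have hq : HasDerivAt (fun t : ℝ => (Complex.I * s^3/3) * (w t * (w t * w t)) + (Complex.I * x * s) * w t)
      ((Complex.I * s^3/3) * ((w θ * Complex.I) * (w θ * w θ) + w θ * ((w θ * Complex.I) * w θ + w θ * (w θ * Complex.I)))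
        + (Complex.I * x * s) * (w θ * Complex.I)) θ :=
    (hw3.const_mul _).add ((hw θ).const_mul _)
  have hqe := hq.cexp
  have hE := (hw θ).mul hqe
  have heq : ∀ t : ℝ, Complex.exp ((Complex.I * s^3/3) * (w t * (w t * w t)) + (Complex.I * x * s) * w t)
      = hh x (w t * s) := by
    intro t
    rw [← exp_poly_eq_hh x s (w t)]
    congr 1; ring
  simp only [heq] at hE
  convert hE using 1
  · rfl
  · rfl
  rw [← heq θ]
  ring

lemma hasDerivAt_P (x θ s : ℝ) :
    HasDerivAt (fun s : ℝ => (s:ℂ) * (Complex.exp ((θ:ℂ) * Complex.I) * hh x (Complex.exp ((θ:ℂ) * Complex.I) * s)))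
      (Complex.exp ((θ:ℂ) * Complex.I) * hh x (Complex.exp ((θ:ℂ) * Complex.I) * s) *
        (1 + Complex.I * ((Complex.exp ((θ:ℂ) * Complex.I))^3 * s^3
          + x * (Complex.exp ((θ:ℂ) * Complex.I)) * s))) s := by
  set w : ℂ := Complex.exp ((θ:ℂ) * Complex.I) with hwdef
  have hs3 : HasDerivAt (fun s : ℝ => (s:ℂ) * ((s:ℂ) * (s:ℂ)))
      (1 * ((s:ℂ) * (s:ℂ)) + (s:ℂ) * (1 * (s:ℂ) + (s:ℂ) * 1)) s :=
    (hasDerivAt_ofReal' s).mul ((hasDerivAt_ofReal' s).mul (hasDerivAt_ofReal' s))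
  have hq : HasDerivAt (fun s : ℝ => (Complex.I * w^3/3) * ((s:ℂ) * ((s:ℂ) * (s:ℂ))) + (Complex.I * x * w) * (s:ℂ))
      ((Complex.I * w^3/3) * (1 * ((s:ℂ) * (s:ℂ)) + (s:ℂ) * (1 * (s:ℂ) + (s:ℂ) * 1))
        + (Complex.I * x * w) * 1) s :=
    (hs3.const_mul _).add ((hasDerivAt_ofReal' s).const_mul _)
  have hqe := hq.cexp
  have hP := (hasDerivAt_ofReal' s).mul (hqe.const_mul w)
  have heq : ∀ t : ℝ, Complex.exp ((Complex.I * w^3/3) * ((t:ℂ) * ((t:ℂ) * (t:ℂ))) + (Complex.I * x * w) * (t:ℂ))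
      = hh x (w * t) := by
    intro t
    rw [← exp_poly_eq_hh x t w]
    congr 1; push_cast; ring
  simp only [heq] at hP
  convert hP using 1
  · rfl
  · rfl
  push_cast
  ring

end Airy6
noncomputable section Airy7
open Real

lemma norm_hh_le (x : ℝ) (z : ℂ) :
    ‖hh x z‖ ≤ Real.exp (‖z‖^3/3 + _root_.abs x * ‖z‖) := by
  rw [hh, Complex.norm_exp]
  apply Real.exp_le_exp.2
  calc (Complex.I * (z^3/3 + x*z)).re ≤ ‖Complex.I * (z^3/3 + x*z)‖ :=
        Complex.re_le_norm _
    _ = ‖z^3/3 + x*z‖ := by rw [norm_mul, Complex.norm_I, one_mul]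
    _ ≤ ‖z^3/3‖ + ‖(x:ℂ)*z‖ := norm_add_le _ _
    _ = ‖z‖^3/3 + _root_.abs x * ‖z‖ := by
        rw [norm_div, norm_pow]
        simp [Complex.norm_real]

lemma norm_hh_arc (x r θ : ℝ) :
    ‖hh x (Complex.exp ((θ:ℂ) * Complex.I) * r)‖
      = Real.exp (-(r^3 * Real.sin (3*θ))/3 - x*r*Real.sin θ) := by
  rw [hh, Complex.norm_exp]
  congr 1
  have hcube : (Complex.exp ((θ:ℂ) * Complex.I) * r)^3
      = Complex.exp ((↑(3*θ):ℂ) * Complex.I) * (r:ℂ)^3 := by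
    rw [mul_pow, ← Complex.exp_nat_mul]
    push_cast
    ring_nf
  have key : Complex.I * ((Complex.exp ((θ:ℂ) * Complex.I) * r)^3/3 + x*(Complex.exp ((θ:ℂ) * Complex.I) * r))
      = ((r^3/3 : ℝ):ℂ) * (Complex.I * Complex.exp ((↑(3*θ):ℂ) * Complex.I))
        + ((x*r : ℝ):ℂ) * (Complex.I * Complex.exp ((θ:ℂ) * Complex.I)) := by
    rw [hcube]; push_cast; ring
  rw [key, Complex.add_re, Complex.re_ofReal_mul, Complex.re_ofReal_mul,
    Complex.I_mul_re, Complex.I_mul_re, Complex.exp_ofReal_mul_I_im,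
    Complex.exp_ofReal_mul_I_im]
  ring

lemma hasDerivAt_A (x R : ℝ) (hR : 0 < R) (θ : ℝ) :
    HasDerivAt (fun θ : ℝ => ∫ s in (0:ℝ)..R,
        Complex.exp ((θ:ℂ) * Complex.I) * hh x (Complex.exp ((θ:ℂ) * Complex.I) * s))
      (Complex.I * ((R:ℂ) * Complex.exp ((θ:ℂ) * Complex.I) * hh x (Complex.exp ((θ:ℂ) * Complex.I) * R))) θ := by
  set D : ℝ → ℝ → ℂ := fun θ s =>
    Complex.I * (Complex.exp ((θ:ℂ) * Complex.I) * hh x (Complex.exp ((θ:ℂ) * Complex.I) * s) *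
      (1 + Complex.I * ((Complex.exp ((θ:ℂ) * Complex.I))^3 * s^3
        + x * (Complex.exp ((θ:ℂ) * Complex.I)) * s))) with hD
  have key := intervalIntegral.hasDerivAt_integral_of_dominated_loc_of_deriv_le
    (𝕜 := ℝ) (μ := MeasureTheory.volume) (a := (0:ℝ)) (b := R) (x₀ := θ)
    (F := fun (θ : ℝ) (s : ℝ) => Complex.exp ((θ:ℂ) * Complex.I) * hh x (Complex.exp ((θ:ℂ) * Complex.I) * s))
    (F' := D)
    (bound := fun _ : ℝ => (1 + (R^3 + (_root_.abs x)*R)) * Real.exp (R^3/3 + (_root_.abs x)*R))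
    (Metric.ball_mem_nhds θ one_pos)
    (Filter.Eventually.of_forall fun θ' =>
      (Continuous.aestronglyMeasurable (by unfold hh; fun_prop)).restrict)
    (Continuous.intervalIntegrable (by unfold hh; fun_prop) _ _)
    (Continuous.aestronglyMeasurable (by rw [hD]; unfold hh; fun_prop)).restrict
    ?_ (intervalIntegrable_const) ?_
  · obtain ⟨-, hder⟩ := key
    convert hder using 1
    · rfl
    have hftc := intervalIntegral.integral_eq_sub_of_hasDerivAt
      (f := fun s : ℝ => (s:ℂ) * (Complex.exp ((θ:ℂ) * Complex.I) * hh x (Complex.exp ((θ:ℂ) * Complex.I) * s)))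
      (f' := fun s : ℝ => Complex.exp ((θ:ℂ) * Complex.I) * hh x (Complex.exp ((θ:ℂ) * Complex.I) * s) *
        (1 + Complex.I * ((Complex.exp ((θ:ℂ) * Complex.I))^3 * s^3
          + x * (Complex.exp ((θ:ℂ) * Complex.I)) * s)))
      (a := (0:ℝ)) (b := R)
      (fun s _ => hasDerivAt_P x θ s)
      (Continuous.intervalIntegrable (by unfold hh; fun_prop) _ _)
    have hDint : ∫ s in (0:ℝ)..R, D θ s
        = Complex.I * ∫ s in (0:ℝ)..R,
            (Complex.exp ((θ:ℂ) * Complex.I) * hh x (Complex.exp ((θ:ℂ) * Complex.I) * s) *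
              (1 + Complex.I * ((Complex.exp ((θ:ℂ) * Complex.I))^3 * s^3
                + x * (Complex.exp ((θ:ℂ) * Complex.I)) * s))) := by
      rw [hD, intervalIntegral.integral_const_mul]
    rw [hDint, hftc]
    push_cast
    ring
  · -- the bound
    filter_upwards with s hs θ' _
    have hs' : s ∈ Set.Ioc 0 R := by rwa [Set.uIoc_of_le hR.le] at hs
    have hs0 : 0 < s := hs'.1
    have hsR : s ≤ R := hs'.2
    rw [hD]
    have habs : ‖Complex.exp ((θ':ℂ) * Complex.I) * s‖ = s := by
      rw [norm_mul, Complex.norm_exp_ofReal_mul_I, Complex.norm_real, Real.norm_eq_abs,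
        _root_.abs_of_nonneg hs0.le, one_mul]
    have h1 : ‖hh x (Complex.exp ((θ':ℂ) * Complex.I) * s)‖ ≤ Real.exp (s^3/3 + _root_.abs x * s) := by
      have := norm_hh_le x (Complex.exp ((θ':ℂ) * Complex.I) * s)
      rwa [habs] at this
    have h2 : ‖(1:ℂ) + Complex.I * ((Complex.exp ((θ':ℂ) * Complex.I))^3 * s^3
        + x * (Complex.exp ((θ':ℂ) * Complex.I)) * s)‖ ≤ 1 + (s^3 + _root_.abs x * s) := by
      refine le_trans (norm_add_le _ _) ?_
      rw [norm_one]
      apply add_le_add le_rfl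
      rw [norm_mul, Complex.norm_I, one_mul]
      refine le_trans (norm_add_le _ _) ?_
      have ha : ‖(Complex.exp ((θ':ℂ) * Complex.I))^3 * (s:ℂ)^3‖ = s^3 := by
        rw [norm_mul, norm_pow, Complex.norm_exp_ofReal_mul_I, one_pow, one_mul, norm_pow,
          Complex.norm_real, Real.norm_eq_abs, _root_.abs_of_nonneg hs0.le]
      have hb : ‖(x:ℂ) * (Complex.exp ((θ':ℂ) * Complex.I)) * (s:ℂ)‖ = _root_.abs x * s := by
        rw [norm_mul, norm_mul, Complex.norm_exp_ofReal_mul_I, Complex.norm_real,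
          Complex.norm_real, Real.norm_eq_abs, Real.norm_eq_abs, _root_.abs_of_nonneg hs0.le, mul_one]
      rw [ha, hb]
    calc ‖D θ' s‖ = ‖hh x (Complex.exp ((θ':ℂ) * Complex.I) * s)‖ *
            ‖(1:ℂ) + Complex.I * ((Complex.exp ((θ':ℂ) * Complex.I))^3 * s^3
              + x * (Complex.exp ((θ':ℂ) * Complex.I)) * s)‖ := by
          rw [hD]
          simp only [norm_mul, Complex.norm_I, Complex.norm_exp_ofReal_mul_I,
            one_mul]
      _ ≤ Real.exp (s^3/3 + _root_.abs x * s) * (1 + (s^3 + _root_.abs x * s)) :=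
          mul_le_mul h1 h2 (norm_nonneg _) (Real.exp_pos _).le
      _ ≤ Real.exp (R^3/3 + _root_.abs x * R) * (1 + (R^3 + _root_.abs x * R)) := by
          gcongr <;> first | exact hs0.le | positivity
      _ = (1 + (R^3 + _root_.abs x * R)) * Real.exp (R^3/3 + _root_.abs x * R) := by ring
  · filter_upwards with t _ θ' _
    exact hasDerivAt_E x t R θ'

end Airy7
noncomputable section Airy8
open Real

lemma contour_identity (x R : ℝ) (hR : 0 < R) :
    ∫ t in (0:ℝ)..R, hh x t = (∫ s in (0:ℝ)..R, ac * FA x s)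
      - ∫ θ in (0:ℝ)..(Real.pi/6),
          Complex.I * ((R:ℂ) * Complex.exp ((θ:ℂ) * Complex.I) * hh x (Complex.exp ((θ:ℂ) * Complex.I) * R)) := by
  have harc := intervalIntegral.integral_eq_sub_of_hasDerivAt
    (f := fun θ : ℝ => ∫ s in (0:ℝ)..R,
        Complex.exp ((θ:ℂ) * Complex.I) * hh x (Complex.exp ((θ:ℂ) * Complex.I) * s))
    (f' := fun θ : ℝ => Complex.I * ((R:ℂ) * Complex.exp ((θ:ℂ) * Complex.I) * hh x (Complex.exp ((θ:ℂ) * Complex.I) * R)))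
    (a := (0:ℝ)) (b := Real.pi/6)
    (fun θ _ => hasDerivAt_A x R hR θ)
    (Continuous.intervalIntegrable (by unfold hh; fun_prop) _ _)
  have hA0 : (∫ s in (0:ℝ)..R,
      Complex.exp (((0:ℝ):ℂ) * Complex.I) * hh x (Complex.exp (((0:ℝ):ℂ) * Complex.I) * s))
      = ∫ t in (0:ℝ)..R, hh x t := by
    congr 1
    funext s
    simp
  have hA6 : (∫ s in (0:ℝ)..R,
      Complex.exp (((Real.pi/6:ℝ):ℂ) * Complex.I) * hh x (Complex.exp (((Real.pi/6:ℝ):ℂ) * Complex.I) * s))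
      = ∫ s in (0:ℝ)..R, ac * FA x s := by
    congr 1
    funext s
    have hac : Complex.exp (((Real.pi/6:ℝ):ℂ) * Complex.I) = ac := rfl
    rw [hac, FA_eq]
  have harc' : (∫ θ in (0:ℝ)..(Real.pi/6),
      Complex.I * ((R:ℂ) * Complex.exp ((θ:ℂ) * Complex.I) * hh x (Complex.exp ((θ:ℂ) * Complex.I) * R)))
      = (∫ s in (0:ℝ)..R, ac * FA x s) - ∫ t in (0:ℝ)..R, hh x t := by
    rw [← hA0, ← hA6]
    simpa using harc
  rw [harc']
  ring

lemma integral_exp_neg_le (k b : ℝ) (hk : 0 < k) (hb : 0 ≤ b) :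
    ∫ θ in (0:ℝ)..b, Real.exp (-k*θ) ≤ 1/k := by
  have hftc := intervalIntegral.integral_eq_sub_of_hasDerivAt
    (f := fun θ : ℝ => -(Real.exp (-k*θ)/k))
    (f' := fun θ : ℝ => Real.exp (-k*θ))
    (a := (0:ℝ)) (b := b)
    (fun θ _ => by
      have h : HasDerivAt (fun t : ℝ => -k*t) (-k) θ := by
        simpa using (hasDerivAt_id θ).const_mul (-k)
      have h2 := (h.exp.div_const k).neg
      exact h2.congr_deriv (by field_simp))
    (Continuous.intervalIntegrable (by fun_prop) _ _)
  rw [hftc]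
  show -(Real.exp (-k*b)/k) - -(Real.exp (-k*0)/k) ≤ 1/k
  have h1 : 0 < Real.exp (-k*b)/k := by positivity
  have h2 : Real.exp (-k*0) = 1 := by norm_num
  rw [h2]
  rw [one_div]
  linarith [inv_nonneg.2 hk.le]

lemma arc_norm_le (x R : ℝ) (hR : 1 ≤ R) (hR2 : Real.pi * _root_.abs x ≤ R^2) :
    ‖∫ θ in (0:ℝ)..(Real.pi/6),
        Complex.I * ((R:ℂ) * Complex.exp ((θ:ℂ) * Complex.I) * hh x (Complex.exp ((θ:ℂ) * Complex.I) * R))‖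
      ≤ Real.pi/R^2 := by
  have hR0 : 0 < R := lt_of_lt_of_le one_pos hR
  have hk : 0 < R^3/Real.pi := by positivity
  have hb : (0:ℝ) ≤ Real.pi/6 := by positivity
  have hbound := intervalIntegral.norm_integral_le_of_norm_le
    (μ := MeasureTheory.volume) (a := (0:ℝ)) (b := Real.pi/6)
    (f := fun θ : ℝ => Complex.I * ((R:ℂ) * Complex.exp ((θ:ℂ) * Complex.I) * hh x (Complex.exp ((θ:ℂ) * Complex.I) * R)))
    (g := fun θ : ℝ => R * Real.exp (-(R^3/Real.pi)*θ))
    hb ?_ (Continuous.intervalIntegrable (by fun_prop) _ _)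
  · refine le_trans hbound ?_
    have hint : ∫ θ in (0:ℝ)..(Real.pi/6), R * Real.exp (-(R^3/Real.pi)*θ)
        = R * ∫ θ in (0:ℝ)..(Real.pi/6), Real.exp (-(R^3/Real.pi)*θ) :=
      intervalIntegral.integral_const_mul _ _
    have hle := integral_exp_neg_le (R^3/Real.pi) (Real.pi/6) hk hb
    have hnn : (0:ℝ) ≤ ∫ θ in (0:ℝ)..(Real.pi/6), Real.exp (-(R^3/Real.pi)*θ) := by
      apply intervalIntegral.integral_nonneg hb
      intro u _
      positivity
    rw [hint]
    calc R * ∫ θ in (0:ℝ)..(Real.pi/6), Real.exp (-(R^3/Real.pi)*θ)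
        ≤ R * (1/(R^3/Real.pi)) := by gcongr
      _ = Real.pi/R^2 := by field_simp
  · -- pointwise bound on the arc
    filter_upwards with θ hθ
    have hθ' : θ ∈ Set.Ioc 0 (Real.pi/6) := hθ
    have hθ0 : 0 < θ := hθ'.1
    have hθ6 : θ ≤ Real.pi/6 := hθ'.2
    have hnorm : ‖Complex.I * ((R:ℂ) * Complex.exp ((θ:ℂ) * Complex.I) * hh x (Complex.exp ((θ:ℂ) * Complex.I) * R))‖
        = R * Real.exp (-(R^3 * Real.sin (3*θ))/3 - x*R*Real.sin θ) := by
      rw [norm_mul, norm_mul, norm_mul,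
        Complex.norm_I, Complex.norm_exp_ofReal_mul_I, Complex.norm_real, Real.norm_eq_abs,
        _root_.abs_of_nonneg hR0.le, one_mul, mul_one]
      rw [norm_hh_arc]
    rw [hnorm]
    apply mul_le_mul_of_nonneg_left _ hR0.le
    apply Real.exp_le_exp.2
    have hsin3 : 2/Real.pi * (3*θ) ≤ Real.sin (3*θ) := by
      apply Real.mul_le_sin (by positivity)
      linarith [hθ6]
    have hsin : Real.sin θ ≤ θ := Real.sin_le hθ0.le
    have hsinnn : 0 ≤ Real.sin θ := by
      apply Real.sin_nonneg_of_nonneg_of_le_pi hθ0.le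
      nlinarith [Real.pi_pos]
    have hpipos := Real.pi_pos
    have f1 : 6*θ ≤ Real.pi * Real.sin (3*θ) := by
      have h6 : 2/Real.pi * (3*θ) = 6*θ/Real.pi := by ring
      rw [h6, div_le_iff₀ hpipos] at hsin3
      linarith [hsin3]
    have hf3 : -(x*Real.sin θ) ≤ _root_.abs x * θ := by
      have h1 : -(x*Real.sin θ) ≤ _root_.abs x * Real.sin θ := by
        nlinarith [neg_abs_le x, hsinnn]
      nlinarith [abs_nonneg x]
    rw [show -(R^3 * Real.sin (3*θ))/3 - x*R*Real.sin θ
        = -((R^3 * Real.sin (3*θ))/3 + x*R*Real.sin θ) by ring,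
      show -(R^3/Real.pi)*θ = -((R^3*θ)/Real.pi) by ring, neg_le_neg_iff,
      div_le_iff₀ hpipos]
    have h1 := mul_le_mul_of_nonneg_left f1 (by positivity : (0:ℝ) ≤ R^3/3)
    have h2 := mul_le_mul_of_nonneg_left hf3 (by positivity : (0:ℝ) ≤ Real.pi*R)
    have h3 := mul_le_mul_of_nonneg_right hR2 (by positivity : (0:ℝ) ≤ θ*R)
    nlinarith [h1, h2, h3]

end Airy8
noncomputable section Airy9
open Real

lemma tendsto_arc (x : ℝ) :
    Tendsto (fun R : ℝ => ∫ θ in (0:ℝ)..(Real.pi/6),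
        Complex.I * ((R:ℂ) * Complex.exp ((θ:ℂ) * Complex.I) * hh x (Complex.exp ((θ:ℂ) * Complex.I) * R)))
      atTop (𝓝 0) := by
  have hg : Tendsto (fun R : ℝ => Real.pi/R^2) atTop (𝓝 0) := by
    rw [show (fun R : ℝ => Real.pi/R^2) = (fun R : ℝ => Real.pi * (R^2)⁻¹) by funext R; ring]
    rw [show (0:ℝ) = Real.pi * 0 by ring]
    apply Tendsto.const_mul
    exact (tendsto_pow_atTop (two_ne_zero)).inv_tendsto_atTop
  refine squeeze_zero_norm' ?_ hg
  · filter_upwards [eventually_ge_atTop (max 1 (Real.sqrt (Real.pi * _root_.abs x)))] with R hR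
    have hR1 : (1:ℝ) ≤ R := le_trans (le_max_left _ _) hR
    have hR2' : Real.sqrt (Real.pi * _root_.abs x) ≤ R := le_trans (le_max_right _ _) hR
    have hR2 : Real.pi * _root_.abs x ≤ R^2 := by
      nlinarith [Real.sq_sqrt (by positivity : (0:ℝ) ≤ Real.pi * _root_.abs x),
        Real.sqrt_nonneg (Real.pi * _root_.abs x)]
    exact arc_norm_le x R hR1 hR2

lemma tendsto_main_part (x : ℝ) :
    Tendsto (fun R : ℝ => ∫ s in (0:ℝ)..R, ac * FA x s) atTop (𝓝 (ac * fAk 0 x)) := by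
  have hint : MeasureTheory.IntegrableOn (fun s : ℝ => ac * FA x s) (Set.Ioi 0) := by
    have := (integrableOn_pow_FA 0 x).const_mul ac
    apply MeasureTheory.IntegrableOn.congr_fun this _ measurableSet_Ioi
    intro s _
    simp
  have := MeasureTheory.intervalIntegral_tendsto_integral_Ioi 0 hint tendsto_id
  have heq : ∫ s in Set.Ioi (0:ℝ), ac * FA x s = ac * fAk 0 x := by
    rw [MeasureTheory.integral_const_mul, fAk_zero_eq]
  rwa [heq] at this

lemma tendsto_hh_integral (x : ℝ) :
    Tendsto (fun R : ℝ => ∫ t in (0:ℝ)..R, hh x t) atTop (𝓝 (ac * fAk 0 x)) := by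
  have h := (tendsto_main_part x).sub (tendsto_arc x)
  rw [sub_zero] at h
  apply h.congr'
  filter_upwards [eventually_gt_atTop (0:ℝ)] with R hR
  exact (contour_identity x R hR).symm

lemma cos_integral_eq (x R : ℝ) :
    ∫ t in (0:ℝ)..R, Real.cos (t^3/3 + x*t) = (∫ t in (0:ℝ)..R, hh x t).re := by
  have hii : IntervalIntegrable (fun t : ℝ => hh x (t:ℂ)) MeasureTheory.volume 0 R :=
    Continuous.intervalIntegrable (by unfold hh; fun_prop) _ _
  have hswap := Complex.reCLM.intervalIntegral_comp_comm hii
  have : (fun t : ℝ => Complex.reCLM (hh x (t:ℂ))) = fun t : ℝ => Real.cos (t^3/3 + x*t) := by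
    funext t
    have harg : Complex.I * ((t:ℂ)^3/3 + x*t) = ((t^3/3 + x*t : ℝ):ℂ) * Complex.I := by
      push_cast; ring
    show (hh x (t:ℂ)).re = _
    rw [hh, harg, Complex.exp_ofReal_mul_I_re]
  rw [← this]
  rw [hswap]
  rfl

lemma airyAi_eq_g0 : airyAi = g0 := by
  funext x
  unfold airyAi
  apply Filter.Tendsto.limUnder_eq
  have h1 : Tendsto (fun R : ℝ => (∫ t in (0:ℝ)..R, hh x t).re) atTop (𝓝 ((ac * fAk 0 x).re)) :=
    (Complex.continuous_re.tendsto _).comp (tendsto_hh_integral x)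
  have h2 := h1.const_mul (1/Real.pi)
  apply h2.congr
  intro R
  rw [cos_integral_eq x R]

end Airy9
/-- for n ≥ 2, the map b ↦ λ_n(b), where λ_n(b) is the unique root of
Ai'(-λ) - b Ai(-λ) = 0 in (-a_{n-1}, -a_n) (a_k the zeros of Ai), is continuously
differentiable on ℝ with λ_n'(b) = 1/(λ_n(b) + b²). -/
theorem eigenvalue_derivative_in_b
    (a : ℕ → ℝ)
    (hazero : ∀ k ≥ 1, airyAi (a k) = 0)
    (haneg : ∀ k ≥ 1, a k < 0)
    (haanti : ∀ k ≥ 1, a (k + 1) < a k)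
    (haall : ∀ x < 0, airyAi x = 0 → ∃ k ≥ 1, a k = x)
    (n : ℕ) (hn : 2 ≤ n)
    (lam : ℝ → ℝ)
    (hroot : ∀ b, deriv airyAi (-(lam b)) - b * airyAi (-(lam b)) = 0)
    (hmem : ∀ b, lam b ∈ Set.Ioo (-(a (n - 1))) (-(a n)))
    (huniq : ∀ b μ, deriv airyAi (-μ) - b * airyAi (-μ) = 0 →
      μ ∈ Set.Ioo (-(a (n - 1))) (-(a n)) → μ = lam b) :
    ContDiff ℝ 1 lam ∧ ∀ b, HasDerivAt lam (1 / (lam b + b ^ 2)) b := by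
  have hg0' : deriv airyAi = g1 := by
    funext x
    rw [airyAi_eq_g0]
    exact (hasDerivAt_g0 x).deriv
  set J := Set.Ioo (-(a (n-1))) (-(a n)) with hJ
  have hn1 : 1 ≤ n - 1 := by omega
  have han1neg : a (n-1) < 0 := haneg _ hn1
  have hmono : ∀ i j, 1 ≤ i → i ≤ j → a j ≤ a i := by
    intro i j hi hij
    induction j with
    | zero => exact absurd hij (by omega)
    | succ j ih =>
      rcases Nat.lt_or_ge i (j+1) with h | h
      · have hij' : i ≤ j := by omega
        have h1 : a (j+1) < a j := haanti j (by omega)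
        exact le_trans h1.le (ih hij')
      · have : i = j+1 := by omega
        rw [this]
  have hJpos : ∀ μ ∈ J, 0 < μ := by
    intro μ hμ
    have h0 : (0:ℝ) < -(a (n-1)) := by linarith
    exact lt_trans h0 hμ.1
  have hZ : ∀ μ ∈ J, g0 (-μ) ≠ 0 := by
    intro μ hμ h0
    have hμpos : 0 < μ := hJpos μ hμ
    have hneg : -μ < 0 := by linarith
    obtain ⟨k, hk1, hk⟩ := haall (-μ) hneg (by rw [airyAi_eq_g0]; exact h0)
    have h1 : a n < a k := by rw [hk]; linarith [hμ.2]
    have h2 : a k < a (n-1) := by rw [hk]; linarith [hμ.1]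
    rcases le_or_gt n k with h | h
    · exact absurd (hmono n k (by omega) h) (not_le.2 h1)
    · have hkn : k ≤ n - 1 := by omega
      exact absurd (hmono k (n-1) hk1 hkn) (not_le.2 h2)
  set β : ℝ → ℝ := fun μ => g1 (-μ) / g0 (-μ) with hβ
  have hβlam : ∀ b, β (lam b) = b := by
    intro b
    have h := hroot b
    rw [hg0', airyAi_eq_g0] at h
    rw [hβ]
    show g1 (-(lam b)) / g0 (-(lam b)) = b
    rw [div_eq_iff (hZ _ (hmem b))]
    linarith [h]
  have hlamβ : ∀ μ ∈ J, lam (β μ) = μ := by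
    intro μ hμ
    refine (huniq (β μ) μ ?_ hμ).symm
    rw [hg0', airyAi_eq_g0, hβ]
    show g1 (-μ) - g1 (-μ) / g0 (-μ) * g0 (-μ) = 0
    rw [div_mul_cancel₀ _ (hZ μ hμ), sub_self]
  have hβd : ∀ μ ∈ J, HasDerivAt β (μ + (β μ)^2) μ := by
    intro μ hμ
    have hu : HasDerivAt (fun μ : ℝ => g1 (-μ)) (μ * g0 (-μ)) μ := by
      have h := (hasDerivAt_g1 (-μ)).comp μ (hasDerivAt_neg μ)
      exact h.congr_deriv (by ring)
    have hv : HasDerivAt (fun μ : ℝ => g0 (-μ)) (-(g1 (-μ))) μ := by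
      have h := (hasDerivAt_g0 (-μ)).comp μ (hasDerivAt_neg μ)
      exact h.congr_deriv (by ring)
    have hdiv := hu.div hv (hZ μ hμ)
    refine hdiv.congr_deriv (Eq.symm ?_)
    rw [hβ]
    have hz := hZ μ hμ
    field_simp
    ring
  have hβmono : StrictMonoOn β J := by
    apply strictMonoOn_of_deriv_pos (convex_Ioo _ _)
    · intro μ hμ
      exact ((hβd μ hμ).continuousAt).continuousWithinAt
    · intro μ hμ
      rw [interior_Ioo] at hμ
      rw [(hβd μ hμ).deriv]
      nlinarith [hJpos μ hμ, sq_nonneg (β μ)]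
  have hlamc : ∀ b₀, ContinuousAt lam b₀ := by
    intro b₀
    have hlb := hmem b₀
    rw [ContinuousAt]
    apply tendsto_order.2
    constructor
    · intro l hl
      set l'' := (max l (-(a (n-1))) + lam b₀)/2 with hl''
      have hmaxlt : max l (-(a (n-1))) < lam b₀ := max_lt hl hlb.1
      have hll : l < l'' := by
        rw [hl'']
        linarith [le_max_left l (-(a (n-1)))]
      have hl1 : l'' < lam b₀ := by rw [hl'']; linarith
      have hl2 : l'' ∈ J := by
        constructor
        · rw [hl'']
          have h1 := le_max_right l (-(a (n-1)))
          have h2 := hlb.1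
          linarith
        · rw [hl'']
          have h2 := hlb.2
          linarith
      have hβl : β l'' < b₀ := by
        have := hβmono hl2 (hmem b₀) hl1
        rwa [hβlam b₀] at this
      filter_upwards [Ioi_mem_nhds hβl] with b hb
      by_contra hle
      push_neg at hle
      have hc : lam b ≤ l'' := le_trans hle hll.le
      have hmle := hβmono.monotoneOn (hmem b) hl2 hc
      rw [hβlam b] at hmle
      have hb' : β l'' < b := hb
      linarith
    · intro u hu
      set u'' := (min u (-(a n)) + lam b₀)/2 with hu''
      have hminlt : lam b₀ < min u (-(a n)) := lt_min hu hlb.2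
      have huu : u'' < u := by
        rw [hu'']
        linarith [min_le_left u (-(a n))]
      have hu1 : lam b₀ < u'' := by rw [hu'']; linarith
      have hu2 : u'' ∈ J := by
        constructor
        · rw [hu'']
          have h2 := hlb.1
          linarith
        · rw [hu'']
          linarith [min_le_right u (-(a n))]
      have hβu : b₀ < β u'' := by
        have := hβmono (hmem b₀) hu2 hu1
        rwa [hβlam b₀] at this
      filter_upwards [Iio_mem_nhds hβu] with b hb
      by_contra hle
      push_neg at hle
      have hc : u'' ≤ lam b := le_trans huu.le hle
      have hmle := hβmono.monotoneOn hu2 (hmem b) hc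
      rw [hβlam b] at hmle
      have hb' : b < β u'' := hb
      linarith
  have hlamd : ∀ b, HasDerivAt lam (1/(lam b + b^2)) b := by
    intro b
    have hmem' := hmem b
    have hβd' := hβd (lam b) hmem'
    rw [hβlam b] at hβd'
    have hpos : 0 < lam b + b^2 := by nlinarith [hJpos _ hmem', sq_nonneg b]
    have hne : lam b + b^2 ≠ 0 := ne_of_gt hpos
    have := HasDerivAt.of_local_left_inverse (hlamc b) hβd' hne
      (Filter.Eventually.of_forall hβlam)
    rwa [one_div]
  constructor
  · rw [contDiff_one_iff_deriv]
    refine ⟨fun b => (hlamd b).differentiableAt, ?_⟩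
    have hd : deriv lam = fun b => 1/(lam b + b^2) := funext fun b => (hlamd b).deriv
    rw [hd]
    have hcont : Continuous lam := continuous_iff_continuousAt.2 hlamc
    apply Continuous.div continuous_const (by fun_prop)
    intro b
    have hpos : 0 < lam b + b^2 := by nlinarith [hJpos _ (hmem b), sq_nonneg b]
    exact ne_of_gt hpos
  · exact hlamd
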